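/- In the GSVD setup with G̃ = U Υ̃ Xᵀ and L̃ = V M̃ Xᵀ, for any r̃ ∈ ℝ^m the vector y := (Xᵀ)⁻¹ Υ̃ᵀ Uᵀ r̃ is the unique minimizer over w ∈ ℝ^n of the Tikhonov functional w ↦ ‖G̃w − r̃‖₂² + ‖L̃w‖₂². -/

import Mathlib

open Matrix

/-- In the GSVD setup with G̃ = U Υ̃ Xᵀ and L̃ = V M̃ Xᵀ, for any r̃ ∈ ℝ^m the vector
y := (Xᵀ)⁻¹ Υ̃ᵀ Uᵀ r̃ is the unique minimizer over w ∈ ℝ^n of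
w ↦ ‖G̃w − r̃‖₂² + ‖L̃w‖₂². -/
theorem gsvd_unique_minimizer
    (m n p : ℕ) (hm : 0 < m) (hmn : m < n) (hpn : p ≤ n) (hnmp : n ≤ m + p)
    (ν μ : ℕ → ℝ)
    (hν0 : ∀ i, n - m ≤ i → i < p → 0 < ν i)
    (hν1 : ∀ i, n - m ≤ i → i < p → ν i < 1)
    (hνmono : ∀ i j, n - m ≤ i → i ≤ j → j < p → ν i ≤ ν j)
    (hμdef : ∀ i, n - m ≤ i → i < p → μ i = Real.sqrt (1 - ν i ^ 2))
    (hνtop : ∀ i, p ≤ i → i < n → ν i = 1)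
    (hμlow : ∀ i, i < n - m → μ i = 1)
    (U : Matrix (Fin m) (Fin m) ℝ) (hU : Uᵀ * U = 1)
    (V : Matrix (Fin p) (Fin p) ℝ) (hV : Vᵀ * V = 1)
    (X : Matrix (Fin n) (Fin n) ℝ) (hX : IsUnit X.det)
    (Υt : Matrix (Fin m) (Fin n) ℝ)
    (hΥt : ∀ (i : Fin m) (j : Fin n), Υt i j = if (j : ℕ) = (n - m) + (i : ℕ) then ν j else 0)
    (Mt : Matrix (Fin p) (Fin n) ℝ)
    (hMt : ∀ (i : Fin p) (j : Fin n), Mt i j = if (j : ℕ) = (i : ℕ) then μ j else 0)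
    (Gt : Matrix (Fin m) (Fin n) ℝ) (hGt : Gt = U * Υt * Xᵀ)
    (Lt : Matrix (Fin p) (Fin n) ℝ) (hLt : Lt = V * Mt * Xᵀ)
    (rt : Fin m → ℝ) (y : Fin n → ℝ)
    (hy : y = (Xᵀ)⁻¹ *ᵥ (Υtᵀ *ᵥ (Uᵀ *ᵥ rt))) :
    ∀ w : Fin n → ℝ, w ≠ y →
      (∑ i, ((Gt *ᵥ y - rt) i) ^ 2) + (∑ i, ((Lt *ᵥ y) i) ^ 2)
        < (∑ i, ((Gt *ᵥ w - rt) i) ^ 2) + (∑ i, ((Lt *ᵥ w) i) ^ 2) := by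
  intro w hw
  set q : ℕ := n - m with hq
  have hqm : q + m = n := by omega
  set s : Fin m → ℝ := Uᵀ *ᵥ rt with hs
  set b : Fin n → ℝ := Υtᵀ *ᵥ s with hb
  -- transpose of X is invertible
  have hXT : IsUnit Xᵀ.det := by rwa [det_transpose]
  have hXinv : Xᵀ * (Xᵀ)⁻¹ = 1 := mul_nonsing_inv _ hXT
  have hXinv' : (Xᵀ)⁻¹ * Xᵀ = 1 := nonsing_inv_mul _ hXT
  have hXy : Xᵀ *ᵥ y = b := by
    rw [hy, mulVec_mulVec, hXinv, one_mulVec]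
  -- orthogonality in the other direction
  have hUU : U * Uᵀ = 1 := mul_eq_one_comm.mp hU
  have hVV : V * Vᵀ = 1 := mul_eq_one_comm.mp hV
  -- norms preserved
  have hUnorm : ∀ v : Fin m → ℝ, (U *ᵥ v) ⬝ᵥ (U *ᵥ v) = v ⬝ᵥ v := by
    intro v
    rw [dotProduct_mulVec, ← mulVec_transpose, mulVec_mulVec, hU, one_mulVec]
  have hVnorm : ∀ v : Fin p → ℝ, (V *ᵥ v) ⬝ᵥ (V *ᵥ v) = v ⬝ᵥ v := by
    intro v
    rw [dotProduct_mulVec, ← mulVec_transpose, mulVec_mulVec, hV, one_mulVec]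
  -- key identity Υtᵀ Υt + Mtᵀ Mt = 1
  have S1 : ∀ j : Fin n, (∑ i : Fin m, Υt i j * Υt i j)
      = if q ≤ (j : ℕ) then ν j * ν j else 0 := by
    intro j
    by_cases h : q ≤ (j : ℕ)
    · rw [if_pos h]
      have hjm : (j : ℕ) - q < m := by omega
      rw [Finset.sum_eq_single (⟨(j : ℕ) - q, hjm⟩ : Fin m)]
      · rw [hΥt, if_pos (by simp; omega)]
      · intro i _ hi
        rw [hΥt]
        rw [if_neg]
        · ring
        · intro hji
          apply hi
          apply Fin.ext
          simp
          omega
      · intro habs; exact absurd (Finset.mem_univ _) habs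
    · rw [if_neg h]
      apply Finset.sum_eq_zero
      intro i _
      rw [hΥt, if_neg (by omega)]
      ring
  have S2 : ∀ j : Fin n, (∑ i : Fin p, Mt i j * Mt i j)
      = if (j : ℕ) < p then μ j * μ j else 0 := by
    intro j
    by_cases h : (j : ℕ) < p
    · rw [if_pos h]
      rw [Finset.sum_eq_single (⟨(j : ℕ), h⟩ : Fin p)]
      · rw [hMt, if_pos (by simp)]
      · intro i _ hi
        rw [hMt, if_neg]
        · ring
        · intro hji
          apply hi
          apply Fin.ext
          simp
          omega
      · intro habs; exact absurd (Finset.mem_univ _) habs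
    · rw [if_neg h]
      apply Finset.sum_eq_zero
      intro i _
      rw [hMt, if_neg (by omega)]
      ring
  have hkey : Υtᵀ * Υt + Mtᵀ * Mt = (1 : Matrix (Fin n) (Fin n) ℝ) := by
    ext j k
    by_cases hjk : j = k
    · subst hjk
      simp only [Matrix.add_apply, mul_apply, transpose_apply, one_apply_eq]
      rw [S1 j, S2 j]
      rcases lt_or_ge (j : ℕ) q with hjq | hjq
      · rw [if_neg (by omega), if_pos (by omega), hμlow _ hjq]
        ring
      · rcases lt_or_ge (j : ℕ) p with hjp | hjp
        · rw [if_pos hjq, if_pos hjp, hμdef _ hjq hjp,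
            Real.mul_self_sqrt (by nlinarith [hν0 _ hjq hjp, hν1 _ hjq hjp])]
          ring
        · rw [if_pos hjq, if_neg (by omega), hνtop _ hjp j.isLt]
          ring
    · simp only [Matrix.add_apply, mul_apply, transpose_apply, one_apply_ne hjk]
      have e1 : (∑ i : Fin m, Υt i j * Υt i k) = 0 := by
        apply Finset.sum_eq_zero
        intro i _
        rw [hΥt, hΥt]
        by_cases h1 : (j : ℕ) = q + (i : ℕ)
        · by_cases h2 : (k : ℕ) = q + (i : ℕ)
          · exact absurd (Fin.ext (show (j : ℕ) = (k : ℕ) by omega)) hjk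
          · rw [if_neg h2]; ring
        · rw [if_neg h1]; ring
      have e2 : (∑ i : Fin p, Mt i j * Mt i k) = 0 := by
        apply Finset.sum_eq_zero
        intro i _
        rw [hMt, hMt]
        by_cases h1 : (j : ℕ) = (i : ℕ)
        · by_cases h2 : (k : ℕ) = (i : ℕ)
          · exact absurd (Fin.ext (show (j : ℕ) = (k : ℕ) by omega)) hjk
          · rw [if_neg h2]; ring
        · rw [if_neg h1]; ring
      rw [e1, e2, add_zero]
  -- squared norms as dot products
  have hsq : ∀ {k : ℕ} (v : Fin k → ℝ), (∑ i, (v i) ^ 2) = v ⬝ᵥ v := by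
    intro k v
    simp [dotProduct, sq]
  -- the quadratic identity
  have hF : ∀ z : Fin n → ℝ,
      (∑ i, ((Gt *ᵥ z - rt) i) ^ 2) + (∑ i, ((Lt *ᵥ z) i) ^ 2)
      = ((Xᵀ *ᵥ z - b) ⬝ᵥ (Xᵀ *ᵥ z - b)) + (s ⬝ᵥ s - b ⬝ᵥ b) := by
    intro z
    set x : Fin n → ℝ := Xᵀ *ᵥ z with hx
    have hUs : U *ᵥ s = rt := by
      rw [hs, mulVec_mulVec, hUU, one_mulVec]
    have h1 : Gt *ᵥ z - rt = U *ᵥ (Υt *ᵥ x - s) := by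
      rw [hGt, ← mulVec_mulVec, ← mulVec_mulVec, mulVec_sub, hUs]
    have h2 : Lt *ᵥ z = V *ᵥ (Mt *ᵥ x) := by
      rw [hLt, ← mulVec_mulVec, ← mulVec_mulVec]
    rw [hsq, hsq, h1, h2, hUnorm, hVnorm]
    -- scalar identities
    have hΥΥ : (Υt *ᵥ x) ⬝ᵥ (Υt *ᵥ x) + (Mt *ᵥ x) ⬝ᵥ (Mt *ᵥ x) = x ⬝ᵥ x := by
      have e1 : (Υt *ᵥ x) ⬝ᵥ (Υt *ᵥ x) = ((Υtᵀ * Υt) *ᵥ x) ⬝ᵥ x := by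
        rw [dotProduct_mulVec, ← mulVec_transpose, mulVec_mulVec, dotProduct_comm]
      have e2 : (Mt *ᵥ x) ⬝ᵥ (Mt *ᵥ x) = ((Mtᵀ * Mt) *ᵥ x) ⬝ᵥ x := by
        rw [dotProduct_mulVec, ← mulVec_transpose, mulVec_mulVec, dotProduct_comm]
      rw [e1, e2, ← add_dotProduct, ← add_mulVec, hkey, one_mulVec]
    have hcross : s ⬝ᵥ (Υt *ᵥ x) = b ⬝ᵥ x := by
      rw [dotProduct_mulVec, ← mulVec_transpose, hb]
    have hcross' : (Υt *ᵥ x) ⬝ᵥ s = b ⬝ᵥ x := by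
      rw [dotProduct_comm]; exact hcross
    have hxb : x ⬝ᵥ b = b ⬝ᵥ x := dotProduct_comm _ _
    simp only [dotProduct_sub, sub_dotProduct] at *
    linarith
  rw [hF y, hF w]
  have hyb : Xᵀ *ᵥ y - b = 0 := by rw [hXy]; exact sub_self b
  rw [hyb, zero_dotProduct]
  have hwb : Xᵀ *ᵥ w - b ≠ 0 := by
    intro h
    apply hw
    have h' : Xᵀ *ᵥ w = Xᵀ *ᵥ y := by rw [hXy]; exact sub_eq_zero.mp h
    have := congrArg (fun v => (Xᵀ)⁻¹ *ᵥ v) h'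
    simpa [mulVec_mulVec, hXinv', one_mulVec] using this
  have hnn : 0 ≤ (Xᵀ *ᵥ w - b) ⬝ᵥ (Xᵀ *ᵥ w - b) :=
    Finset.sum_nonneg fun i _ => mul_self_nonneg _
  have hpos : 0 < (Xᵀ *ᵥ w - b) ⬝ᵥ (Xᵀ *ᵥ w - b) :=
    lt_of_le_of_ne hnn (Ne.symm ((dotProduct_self_eq_zero).not.mpr hwb))
  linarith
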